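/- Let n ≥ 1, x ∈ ℝⁿ, and let B_K((x,u), 1) = {(x',u') : d_K((x,u),(x',u')) < 1} where d_K((x,u),(x',u')) = (√((|x|²+|x'|²)² + (2|u−u'|)²) − 2⟨x,x'⟩)^{1/2}. Then the Lebesgue measure of B_K((x,u),1) satisfies (1/8)·(1+|x|)·B(n/2, 3/2)·|S^{n−1}| ≤ |B_K((x,u),1)| ≤ (1+|x|)·B(n/2, 3/2)·|S^{n−1}|, where B is the Beta function and |S^{n−1}| = 2π^{n/2}/Γ(n/2) is the surface area of the unit sphere in ℝⁿ. -/

import Mathlib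

open scoped RealInnerProductSpace
open MeasureTheory Real
open scoped ENNReal

noncomputable def dK {n : ℕ} (g g' : EuclideanSpace ℝ (Fin n) × ℝ) : ℝ :=
  Real.sqrt (Real.sqrt ((‖g.1‖ ^ 2 + ‖g'.1‖ ^ 2) ^ 2 + (2 * |g.2 - g'.2|) ^ 2)
    - 2 * ⟪g.1, g'.1⟫)

lemma slice_volume {n : ℕ} (f : EuclideanSpace ℝ (Fin n) → ℝ) (hf : Continuous f) (u : ℝ) :
    volume {p : EuclideanSpace ℝ (Fin n) × ℝ | (p.2 - u) ^ 2 < f p.1} =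
      ∫⁻ y, ENNReal.ofReal (2 * Real.sqrt (f y)) := by
  have hopen : IsOpen {p : EuclideanSpace ℝ (Fin n) × ℝ | (p.2 - u) ^ 2 < f p.1} :=
    isOpen_lt (by fun_prop) (hf.comp continuous_fst)
  rw [Measure.volume_eq_prod, Measure.prod_apply hopen.measurableSet]
  refine lintegral_congr fun y => ?_
  have hsec : (Prod.mk y ⁻¹' {p : EuclideanSpace ℝ (Fin n) × ℝ | (p.2 - u) ^ 2 < f p.1}) =
      Set.Ioo (u - Real.sqrt (f y)) (u + Real.sqrt (f y)) := by
    ext t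
    simp only [Set.mem_preimage, Set.mem_setOf_eq, Set.mem_Ioo]
    rw [show (t - u) ^ 2 = |t - u| ^ 2 by rw [sq_abs], ← Real.lt_sqrt (abs_nonneg _), abs_lt]
    constructor <;> intro h <;> constructor <;> linarith [h.1, h.2]
  rw [hsec, Real.volume_Ioo]
  congr 1
  ring

lemma J_val (n : ℕ) :
    ∫⁻ y : EuclideanSpace ℝ (Fin n), ENNReal.ofReal (Real.sqrt (1 - ‖y‖ ^ 2)) =
      ENNReal.ofReal (Real.sqrt π ^ (n + 1) / (2 * Real.Gamma ((n : ℝ) / 2 + 3 / 2))) := by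
  have hΓd : (0:ℝ) < Real.Gamma ((n : ℝ) / 2 + 3 / 2) := Real.Gamma_pos_of_pos (by positivity)
  have hslice := slice_volume (fun y : EuclideanSpace ℝ (Fin n) => 1 - ‖y‖ ^ 2)
    (by fun_prop) 0
  set e1 := (MeasurableEquiv.toLp 2 (Fin n → ℝ)).symm with he1
  set e2 := MeasurableEquiv.piFinSuccAbove (fun _ : Fin (n + 1) => ℝ) 0 with he2
  have hψ : MeasurePreserving
      (fun q : Fin (n + 1) → ℝ =>
        ((e1.symm ((e2 q).2) : EuclideanSpace ℝ (Fin n)), (e2 q).1))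
      volume volume := by
    have h1 : MeasurePreserving e2 volume volume :=
      volume_preserving_piFinSuccAbove (fun _ : Fin (n + 1) => ℝ) 0
    have h2 : MeasurePreserving (Prod.swap : ℝ × (Fin n → ℝ) → (Fin n → ℝ) × ℝ)
        volume volume := by
      rw [Measure.volume_eq_prod, Measure.volume_eq_prod]; exact Measure.measurePreserving_swap
    have h3 : MeasurePreserving
        (Prod.map (⇑e1.symm) (id : ℝ → ℝ)) volume volume := by
      rw [Measure.volume_eq_prod, Measure.volume_eq_prod]
      exact ((EuclideanSpace.volume_preserving_symm_measurableEquiv_toLp (Fin n)).symm).prod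
        (MeasurePreserving.id _)
    exact (h3.comp h2).comp h1
  have hopen : IsOpen {p : EuclideanSpace ℝ (Fin n) × ℝ | (p.2 - 0) ^ 2 < 1 - ‖p.1‖ ^ 2} :=
    isOpen_lt (by fun_prop) (by fun_prop)
  have hpre : (fun q : Fin (n + 1) → ℝ =>
        ((e1.symm ((e2 q).2) : EuclideanSpace ℝ (Fin n)), (e2 q).1)) ⁻¹'
      {p : EuclideanSpace ℝ (Fin n) × ℝ | (p.2 - 0) ^ 2 < 1 - ‖p.1‖ ^ 2} =
      {q : Fin (n + 1) → ℝ | ∑ i, |q i| ^ (2:ℝ) < 1} := by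
    ext q
    simp only [Set.mem_preimage, Set.mem_setOf_eq]
    have hq2 : ∀ a : ℝ, |a| ^ (2:ℝ) = a ^ 2 := fun a => by
      rw [show (2:ℝ) = ((2:ℕ):ℝ) by norm_num, Real.rpow_natCast, sq_abs]
    have happ : ∀ j : Fin n, (e1.symm ((e2 q).2) : EuclideanSpace ℝ (Fin n)) j = q j.succ := by
      intro j
      change ((e2 q).2) j = q j.succ
      rw [he2]
      simp [MeasurableEquiv.piFinSuccAbove_apply, Fin.removeNth, Fin.succAbove_zero, Fin.tail]
    have hfst : (e2 q).1 = q 0 := by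
      rw [he2]; simp [MeasurableEquiv.piFinSuccAbove_apply]
    have hnorm : ‖(e1.symm ((e2 q).2) : EuclideanSpace ℝ (Fin n))‖ ^ 2
        = ∑ j : Fin n, q j.succ ^ 2 := by
      rw [EuclideanSpace.norm_eq, Real.sq_sqrt (by positivity)]
      refine Finset.sum_congr rfl fun j _ => ?_
      rw [happ j, Real.norm_eq_abs, sq_abs]
    rw [hfst, hnorm]
    simp only [hq2]
    rw [Fin.sum_univ_succ]
    constructor <;> intro h <;> nlinarith [h]
  have hvol : volume {p : EuclideanSpace ℝ (Fin n) × ℝ | (p.2 - 0) ^ 2 < 1 - ‖p.1‖ ^ 2} =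
      ENNReal.ofReal (Real.sqrt π ^ (n + 1) / Real.Gamma ((n : ℝ) / 2 + 3 / 2)) := by
    rw [← hψ.measure_preimage hopen.measurableSet.nullMeasurableSet, hpre,
      MeasureTheory.volume_sum_rpow_lt_one (Fin (n + 1)) one_le_two]
    congr 1
    rw [Fintype.card_fin]
    rw [show (1:ℝ) / 2 + 1 = 1 / 2 + 1 from rfl,
      Real.Gamma_add_one (by norm_num : (1:ℝ)/2 ≠ 0), Real.Gamma_one_half_eq]
    have harg : ((n + 1 : ℕ) : ℝ) / 2 + 1 = (n : ℝ) / 2 + 3 / 2 := by push_cast; ring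
    rw [harg]
    congr 1
    rw [show 2 * (1 / 2 * Real.sqrt π) = Real.sqrt π by ring]
  have key : (2 : ℝ≥0∞) * (∫⁻ y : EuclideanSpace ℝ (Fin n),
      ENNReal.ofReal (Real.sqrt (1 - ‖y‖ ^ 2))) =
      ENNReal.ofReal (Real.sqrt π ^ (n + 1) / Real.Gamma ((n : ℝ) / 2 + 3 / 2)) := by
    rw [← hvol]
    rw [hslice]
    rw [← lintegral_const_mul' 2 _ (by norm_num : (2:ℝ≥0∞) ≠ ⊤)]
    refine lintegral_congr fun y => ?_
    rw [ENNReal.ofReal_mul (by norm_num : (0:ℝ) ≤ 2), ENNReal.ofReal_ofNat]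
  refine (ENNReal.mul_right_inj (by norm_num : (2:ℝ≥0∞) ≠ 0)
    (by norm_num : (2:ℝ≥0∞) ≠ ⊤)).mp ?_
  rw [key, ← ENNReal.ofReal_ofNat 2, ← ENNReal.ofReal_mul (by norm_num : (0:ℝ) ≤ 2)]
  congr 1
  field_simp

set_option maxHeartbeats 1000000 in
theorem volume_BK (n : ℕ) (hn : 1 ≤ n) (x : EuclideanSpace ℝ (Fin n)) (u : ℝ) :
    ENNReal.ofReal ((1 / 8) * (1 + ‖x‖) *
        (Real.Gamma (n / 2) * Real.Gamma (3 / 2) / Real.Gamma (n / 2 + 3 / 2)) *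
        (2 * Real.pi ^ ((n : ℝ) / 2) / Real.Gamma (n / 2))) ≤
      volume {p : EuclideanSpace ℝ (Fin n) × ℝ | dK (x, u) p < 1} ∧
    volume {p : EuclideanSpace ℝ (Fin n) × ℝ | dK (x, u) p < 1} ≤
      ENNReal.ofReal ((1 + ‖x‖) *
        (Real.Gamma (n / 2) * Real.Gamma (3 / 2) / Real.Gamma (n / 2 + 3 / 2)) *
        (2 * Real.pi ^ ((n : ℝ) / 2) / Real.Gamma (n / 2))) := by
  have hn' : (0:ℝ) < (n : ℝ) := by exact_mod_cast hn
  have hΓn : (0:ℝ) < Real.Gamma ((n : ℝ) / 2) := Real.Gamma_pos_of_pos (by positivity)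
  have hΓd : (0:ℝ) < Real.Gamma ((n : ℝ) / 2 + 3 / 2) := Real.Gamma_pos_of_pos (by positivity)
  have hG32 : Real.Gamma (3 / 2) = Real.sqrt π / 2 := by
    rw [show (3 / 2 : ℝ) = 1 / 2 + 1 by norm_num,
      Real.Gamma_add_one (by norm_num : (1:ℝ)/2 ≠ 0), Real.Gamma_one_half_eq]
    ring
  have hppow : (Real.sqrt π : ℝ) ^ n = π ^ ((n : ℝ) / 2) := by
    rw [Real.sqrt_eq_rpow, ← Real.rpow_natCast (π ^ (1 / (2:ℝ))) n,
      ← Real.rpow_mul Real.pi_pos.le, show (1 / (2:ℝ)) * (n : ℝ) = (n : ℝ) / 2 by ring]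
  set f : EuclideanSpace ℝ (Fin n) → ℝ :=
    fun y => (1 - ‖y - x‖ ^ 2) * (1 + ‖y + x‖ ^ 2) / 4 with hfdef
  have hsetEq : {p : EuclideanSpace ℝ (Fin n) × ℝ | dK (x, u) p < 1} =
      {p : EuclideanSpace ℝ (Fin n) × ℝ | (p.2 - u) ^ 2 < f p.1} := by
    ext p
    simp only [Set.mem_setOf_eq]
    have hA : ‖p.1 - x‖ ^ 2 = ‖x‖ ^ 2 + ‖p.1‖ ^ 2 - 2 * ⟪x, p.1⟫ := by
      rw [norm_sub_sq_real, real_inner_comm p.1 x]; ring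
    have hB : ‖p.1 + x‖ ^ 2 = ‖x‖ ^ 2 + ‖p.1‖ ^ 2 + 2 * ⟪x, p.1⟫ := by
      rw [norm_add_sq_real, real_inner_comm p.1 x]; ring
    show Real.sqrt (Real.sqrt ((‖x‖ ^ 2 + ‖p.1‖ ^ 2) ^ 2 + (2 * |u - p.2|) ^ 2)
        - 2 * ⟪x, p.1⟫) < 1 ↔ (p.2 - u) ^ 2 < (1 - ‖p.1 - x‖ ^ 2) * (1 + ‖p.1 + x‖ ^ 2) / 4
    rw [Real.sqrt_lt' one_pos, one_pow]
    have hT : (2 * |u - p.2|) ^ 2 = 4 * (p.2 - u) ^ 2 := by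
      rw [mul_pow, sq_abs]; ring
    rw [hT, hA, hB]
    constructor
    · intro h
      have hs : Real.sqrt ((‖x‖ ^ 2 + ‖p.1‖ ^ 2) ^ 2 + 4 * (p.2 - u) ^ 2)
          < 1 + 2 * ⟪x, p.1⟫ := by linarith
      have hpos : 0 < 1 + 2 * ⟪x, p.1⟫ := lt_of_le_of_lt (Real.sqrt_nonneg _) hs
      have hsq := (Real.sqrt_lt' hpos).mp hs
      nlinarith [hsq]
    · intro h
      have hAnn : (0:ℝ) ≤ ‖x‖ ^ 2 + ‖p.1‖ ^ 2 - 2 * ⟪x, p.1⟫ := by rw [← hA]; positivity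
      have hBnn : (0:ℝ) ≤ ‖x‖ ^ 2 + ‖p.1‖ ^ 2 + 2 * ⟪x, p.1⟫ := by rw [← hB]; positivity
      have h1s : ‖x‖ ^ 2 + ‖p.1‖ ^ 2 - 2 * ⟪x, p.1⟫ < 1 := by
        nlinarith [h, sq_nonneg (p.2 - u), hBnn]
      have hpos : 0 < 1 + 2 * ⟪x, p.1⟫ := by
        nlinarith [h1s, sq_nonneg ‖x‖, sq_nonneg ‖p.1‖]
      have hsq : (‖x‖ ^ 2 + ‖p.1‖ ^ 2) ^ 2 + 4 * (p.2 - u) ^ 2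
          < (1 + 2 * ⟪x, p.1⟫) ^ 2 := by nlinarith [h]
      have := (Real.sqrt_lt' hpos).mpr hsq
      linarith
  have hfc : Continuous f := by
    apply Continuous.div_const
    fun_prop
  have hvol : volume {p : EuclideanSpace ℝ (Fin n) × ℝ | dK (x, u) p < 1} =
      ∫⁻ y, ENNReal.ofReal (2 * Real.sqrt (f y)) := by
    rw [hsetEq]; exact slice_volume f hfc u
  have hbound : ∀ y : EuclideanSpace ℝ (Fin n),
      (1 / 4) * (1 + ‖x‖) * Real.sqrt (1 - ‖y - x‖ ^ 2) ≤ 2 * Real.sqrt (f y) ∧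
      2 * Real.sqrt (f y) ≤ 2 * (1 + ‖x‖) * Real.sqrt (1 - ‖y - x‖ ^ 2) := by
    intro y
    have h24 : 2 * Real.sqrt (f y)
        = Real.sqrt ((1 - ‖y - x‖ ^ 2) * (1 + ‖y + x‖ ^ 2)) := by
      rw [hfdef]
      simp only []
      rw [Real.sqrt_div' _ (by norm_num : (0:ℝ) ≤ 4),
        show Real.sqrt 4 = 2 by
          rw [show (4:ℝ) = 2 ^ 2 by norm_num, Real.sqrt_sq (by norm_num : (0:ℝ) ≤ 2)]]
      ring
    rw [h24]
    rcases le_or_gt (1 - ‖y - x‖ ^ 2) 0 with hc | hc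
    · have h1 : Real.sqrt (1 - ‖y - x‖ ^ 2) = 0 := Real.sqrt_eq_zero'.mpr hc
      have h2 : Real.sqrt ((1 - ‖y - x‖ ^ 2) * (1 + ‖y + x‖ ^ 2)) = 0 :=
        Real.sqrt_eq_zero'.mpr (mul_nonpos_of_nonpos_of_nonneg hc (by positivity))
      rw [h1, h2]
      constructor <;> nlinarith [norm_nonneg x]
    · have hr : ‖y - x‖ < 1 := by nlinarith [norm_nonneg (y - x)]
      have hsplit : Real.sqrt ((1 - ‖y - x‖ ^ 2) * (1 + ‖y + x‖ ^ 2)) =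
          Real.sqrt (1 - ‖y - x‖ ^ 2) * Real.sqrt (1 + ‖y + x‖ ^ 2) :=
        Real.sqrt_mul hc.le _
      have h2x : ‖x + x‖ = 2 * ‖x‖ := by rw [← two_smul ℝ x, norm_smul]; simp
      have htri1 : ‖y + x‖ ≤ 1 + 2 * ‖x‖ := by
        have hd : y + x = (y - x) + (x + x) := by abel
        calc ‖y + x‖ = ‖(y - x) + (x + x)‖ := by rw [← hd]
          _ ≤ ‖y - x‖ + ‖x + x‖ := norm_add_le _ _
          _ ≤ 1 + 2 * ‖x‖ := by rw [h2x]; linarith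
      have htri2 : 2 * ‖x‖ - 1 ≤ ‖y + x‖ := by
        have hd : x + x = (y + x) - (y - x) := by abel
        have h' : ‖x + x‖ ≤ ‖y + x‖ + ‖y - x‖ := by rw [hd]; exact norm_sub_le _ _
        rw [h2x] at h'; linarith
      have hub : Real.sqrt (1 + ‖y + x‖ ^ 2) ≤ 2 * (1 + ‖x‖) := by
        rw [show 2 * (1 + ‖x‖) = Real.sqrt ((2 * (1 + ‖x‖)) ^ 2) from
          (Real.sqrt_sq (by positivity)).symm]
        apply Real.sqrt_le_sqrt
        nlinarith [norm_nonneg (y + x), norm_nonneg x, htri1]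
      have hlb : (1 / 4) * (1 + ‖x‖) ≤ Real.sqrt (1 + ‖y + x‖ ^ 2) := by
        rw [Real.le_sqrt (by positivity) (by positivity)]
        rcases le_or_gt ‖x‖ 1 with h1 | h1
        · nlinarith [sq_nonneg ‖y + x‖, norm_nonneg x]
        · have hb' : (0:ℝ) ≤ ‖y + x‖ + 2 * ‖x‖ - 1 := by
            linarith [norm_nonneg (y + x)]
          nlinarith [htri2, hb', norm_nonneg (y + x)]
      rw [hsplit]
      have hsnn : 0 ≤ Real.sqrt (1 - ‖y - x‖ ^ 2) := Real.sqrt_nonneg _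
      constructor
      · calc (1 / 4) * (1 + ‖x‖) * Real.sqrt (1 - ‖y - x‖ ^ 2)
            = Real.sqrt (1 - ‖y - x‖ ^ 2) * ((1 / 4) * (1 + ‖x‖)) := by ring
          _ ≤ Real.sqrt (1 - ‖y - x‖ ^ 2) * Real.sqrt (1 + ‖y + x‖ ^ 2) :=
              mul_le_mul_of_nonneg_left hlb hsnn
      · calc Real.sqrt (1 - ‖y - x‖ ^ 2) * Real.sqrt (1 + ‖y + x‖ ^ 2)
            ≤ Real.sqrt (1 - ‖y - x‖ ^ 2) * (2 * (1 + ‖x‖)) :=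
              mul_le_mul_of_nonneg_left hub hsnn
          _ = 2 * (1 + ‖x‖) * Real.sqrt (1 - ‖y - x‖ ^ 2) := by ring
  have hJtrans : ∫⁻ y : EuclideanSpace ℝ (Fin n),
      ENNReal.ofReal (Real.sqrt (1 - ‖y - x‖ ^ 2)) =
      ENNReal.ofReal (Real.sqrt π ^ (n + 1) / (2 * Real.Gamma ((n : ℝ) / 2 + 3 / 2))) := by
    rw [← J_val n]
    exact lintegral_sub_right_eq_self
      (fun z : EuclideanSpace ℝ (Fin n) => ENNReal.ofReal (Real.sqrt (1 - ‖z‖ ^ 2))) x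
  constructor
  · rw [hvol]
    calc ENNReal.ofReal ((1 / 8) * (1 + ‖x‖) *
          (Real.Gamma ((n:ℝ) / 2) * Real.Gamma (3 / 2) / Real.Gamma ((n:ℝ) / 2 + 3 / 2)) *
          (2 * Real.pi ^ ((n : ℝ) / 2) / Real.Gamma ((n:ℝ) / 2)))
        = ENNReal.ofReal ((1 / 4) * (1 + ‖x‖)) *
          ENNReal.ofReal (Real.sqrt π ^ (n + 1) / (2 * Real.Gamma ((n : ℝ) / 2 + 3 / 2))) := by
          rw [← ENNReal.ofReal_mul (by positivity)]
          congr 1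
          rw [hG32, pow_succ, hppow]
          field_simp
          ring
      _ = ENNReal.ofReal ((1 / 4) * (1 + ‖x‖)) *
          ∫⁻ y, ENNReal.ofReal (Real.sqrt (1 - ‖y - x‖ ^ 2)) := by rw [hJtrans]
      _ = ∫⁻ y, ENNReal.ofReal ((1 / 4) * (1 + ‖x‖)) *
            ENNReal.ofReal (Real.sqrt (1 - ‖y - x‖ ^ 2)) :=
          (lintegral_const_mul' _ _ ENNReal.ofReal_ne_top).symm
      _ = ∫⁻ y, ENNReal.ofReal ((1 / 4) * (1 + ‖x‖) * Real.sqrt (1 - ‖y - x‖ ^ 2)) := by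
          simp_rw [← ENNReal.ofReal_mul (by positivity : (0:ℝ) ≤ (1 / 4) * (1 + ‖x‖))]
      _ ≤ ∫⁻ y, ENNReal.ofReal (2 * Real.sqrt (f y)) :=
          lintegral_mono fun y => ENNReal.ofReal_le_ofReal (hbound y).1
  · rw [hvol]
    calc ∫⁻ y, ENNReal.ofReal (2 * Real.sqrt (f y))
        ≤ ∫⁻ y, ENNReal.ofReal (2 * (1 + ‖x‖) * Real.sqrt (1 - ‖y - x‖ ^ 2)) :=
          lintegral_mono fun y => ENNReal.ofReal_le_ofReal (hbound y).2
      _ = ENNReal.ofReal (2 * (1 + ‖x‖)) *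
          ∫⁻ y, ENNReal.ofReal (Real.sqrt (1 - ‖y - x‖ ^ 2)) := by
          simp_rw [ENNReal.ofReal_mul (by positivity : (0:ℝ) ≤ 2 * (1 + ‖x‖))]
          exact lintegral_const_mul' _ _ ENNReal.ofReal_ne_top
      _ = ENNReal.ofReal (2 * (1 + ‖x‖)) *
          ENNReal.ofReal (Real.sqrt π ^ (n + 1) / (2 * Real.Gamma ((n : ℝ) / 2 + 3 / 2))) := by
          rw [hJtrans]
      _ = ENNReal.ofReal ((1 + ‖x‖) *
          (Real.Gamma ((n:ℝ) / 2) * Real.Gamma (3 / 2) / Real.Gamma ((n:ℝ) / 2 + 3 / 2)) *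
          (2 * Real.pi ^ ((n : ℝ) / 2) / Real.Gamma ((n:ℝ) / 2))) := by
          rw [← ENNReal.ofReal_mul (by positivity)]
          congr 1
          rw [hG32, pow_succ, hppow]
          field_simp
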